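/- Let (M,J) be a compact connected almost complex manifold with trivializable canonical bundle K, and suppose some tensor power K^{⊗l₀} (l₀ ≥ 1 minimal) admits a never-vanishing pseudoholomorphic section. Then dim_ℂ P_l = 1 if l₀ | l and dim_ℂ P_l = 0 otherwise, where P_l is the space of pseudoholomorphic sections of K^{⊗l}; consequently the Kodaira dimension κ_J = 0. -/
import Mathlib


open Filter

/-- The operator `D_l(f) = ∂̄f + l·f·γ`, so that `f·Ω^{⊗l}` is a
pseudoholomorphic section of `K^{⊗l}` iff `D_l(f) = 0`, where `Ω` is a
never-vanishing trivialization of the canonical bundle `K` and `∂̄Ω = γ∧Ω`. -/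
noncomputable def Dop {M : Type*} [TopologicalSpace M]
    {A : Type*} [AddCommGroup A] [Module ℂ A] [Module C(M, ℂ) A]
    [IsScalarTower ℂ C(M, ℂ) A]
    (dbar : C(M, ℂ) →ₗ[ℂ] A) (γ : A) (l : ℕ) : C(M, ℂ) →ₗ[ℂ] A where
  toFun f := dbar f + (l : ℂ) • (f • γ)
  map_add' f g := by simp [add_smul]; abel
  map_smul' c f := by
    simp [smul_assoc, smul_comm c ((l : ℂ))]

section Aux
variable {M : Type*} [TopologicalSpace M]
    {A : Type*} [AddCommGroup A] [Module ℂ A] [Module C(M, ℂ) A]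
    [IsScalarTower ℂ C(M, ℂ) A]

lemma aux_smul_comm (c : ℂ) (f : C(M, ℂ)) (a : A) : f • (c • a) = c • (f • a) := by
  have h1 : c • a = (c • (1 : C(M, ℂ))) • a := by rw [smul_assoc, one_smul]
  rw [h1, ← mul_smul, mul_smul_comm, mul_one, smul_assoc]

lemma aux_csmul (c : ℂ) (a : A) : c • a = (c • (1 : C(M, ℂ))) • a := by
  rw [smul_assoc, one_smul]

variable (dbar : C(M, ℂ) →ₗ[ℂ] A)
    (hleib : ∀ f g : C(M, ℂ), dbar (f * g) = f • dbar g + g • dbar f)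

include hleib in
lemma aux_dbar_one : dbar 1 = 0 := by
  have h := hleib 1 1
  rw [mul_one, one_smul] at h
  have h2 : dbar 1 + dbar 1 = dbar 1 + 0 := by rw [add_zero]; exact h.symm
  exact (add_left_cancel h2)

include hleib in
lemma aux_Dop_pow (γ : A) {r : ℕ} {g : C(M, ℂ)} (hg : Dop dbar γ r g = 0) (k : ℕ) :
    Dop dbar γ (k * r) (g ^ k) = 0 := by
  have hg' : dbar g = -((r : ℂ) • (g • γ)) := by
    have : dbar g + (r : ℂ) • (g • γ) = 0 := hg
    exact eq_neg_of_add_eq_zero_left hg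
  induction k with
  | zero =>
    show dbar (g ^ 0) + ((0 * r : ℕ) : ℂ) • ((g ^ 0) • γ) = 0
    simp [aux_dbar_one dbar hleib]
  | succ k ih =>
    have ih' : dbar (g ^ k) = -(((k * r : ℕ) : ℂ) • ((g ^ k) • γ)) :=
      eq_neg_of_add_eq_zero_left ih
    show dbar (g ^ (k + 1)) + (((k + 1) * r : ℕ) : ℂ) • ((g ^ (k + 1)) • γ) = 0
    have hp : g ^ (k + 1) = g * g ^ k := by ring
    rw [hp, hleib, hg', ih', smul_neg, smul_neg, aux_smul_comm, aux_smul_comm,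
      ← mul_smul, ← mul_smul]
    have hm : g ^ k * g = g * g ^ k := mul_comm _ _
    rw [hm, ← neg_add, ← add_smul]
    have hc : ((k * r : ℕ) : ℂ) + (r : ℂ) = (((k + 1) * r : ℕ) : ℂ) := by push_cast; ring
    rw [hc, neg_add_cancel]

omit [IsScalarTower ℂ C(M, ℂ) A] in
lemma aux_smul_cancel {f : C(M, ℂ)} (hf : ∀ x, f x ≠ 0) {a : A} (h : f • a = 0) :
    a = 0 := by
  let finv : C(M, ℂ) := ⟨fun x => (f x)⁻¹, f.continuous.inv₀ hf⟩
  have h1 : finv * f = 1 := by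
    ext x
    exact inv_mul_cancel₀ (hf x)
  calc a = (finv * f) • a := by rw [h1, one_smul]
    _ = finv • (f • a) := mul_smul _ _ _
    _ = 0 := by rw [h, smul_zero]

include hleib in
lemma aux_descend (γ : A) {l₀ : ℕ} {F : C(M, ℂ)} (hFnv : ∀ x, F x ≠ 0)
    (hF : Dop dbar γ l₀ F = 0) {l q r : ℕ} (hl : l = q * l₀ + r)
    {g : C(M, ℂ)} (hg : Dop dbar γ l g = 0) :
    ∃ h : C(M, ℂ), g = h * F ^ q ∧ Dop dbar γ r h = 0 := by
  have hFqnv : ∀ x, (F ^ q) x ≠ 0 := fun x => by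
    simp only [ContinuousMap.pow_apply]
    exact pow_ne_zero _ (hFnv x)
  let finv : C(M, ℂ) := ⟨fun x => ((F ^ q) x)⁻¹, (F ^ q).continuous.inv₀ hFqnv⟩
  have h1 : finv * F ^ q = 1 := by
    ext x
    exact inv_mul_cancel₀ (hFqnv x)
  refine ⟨g * finv, ?_, ?_⟩
  · rw [mul_assoc, h1, mul_one]
  · set h : C(M, ℂ) := g * finv with hh
    have hgh : g = h * F ^ q := by rw [hh, mul_assoc, h1, mul_one]
    have hFq : dbar (F ^ q) = -(((q * l₀ : ℕ) : ℂ) • ((F ^ q) • γ)) :=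
      eq_neg_of_add_eq_zero_left (aux_Dop_pow dbar hleib γ hF q)
    have hg' : dbar (h * F ^ q) + ((l : ℕ) : ℂ) • ((h * F ^ q) • γ) = 0 := by
      rw [← hgh]; exact hg
    rw [hleib, hFq, smul_neg, aux_smul_comm, ← mul_smul] at hg'
    -- hg' : -(↑(q*l₀) • ((h * F^q) • γ)) + (F^q) • dbar h + ↑l • ((h*F^q) • γ) = 0
    have key : (F ^ q) • (dbar h + (r : ℂ) • (h • γ)) = 0 := by
      rw [smul_add (F ^ q) (dbar h), aux_smul_comm, ← mul_smul]
      have hm : F ^ q * h = h * F ^ q := mul_comm _ _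
      rw [hm]
      have hc : ((l : ℕ) : ℂ) = ((q * l₀ : ℕ) : ℂ) + (r : ℂ) := by
        rw [hl]; push_cast; ring
      rw [hc, add_smul] at hg'
      calc F ^ q • dbar h + (r : ℂ) • ((h * F ^ q) • γ)
          = -(((q * l₀ : ℕ) : ℂ) • ((h * F ^ q) • γ)) + F ^ q • dbar h +
            (((q * l₀ : ℕ) : ℂ) • ((h * F ^ q) • γ) + (r : ℂ) • ((h * F ^ q) • γ)) := by
            abel
        _ = 0 := hg'
    have := aux_smul_cancel hFqnv key
    exact this

end Aux

/-- if `(M,J)` is compact connected with trivializable canonical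
bundle and `l₀ ≥ 1` is minimal such that `K^{⊗l₀}` admits a never-vanishing
pseudoholomorphic section, then `dim_ℂ P_l = 1` if `l₀ ∣ l` and `= 0`
otherwise, where `P_l = ker D_l` is the space of pseudoholomorphic sections of
`K^{⊗l}`; consequently the Kodaira dimension
`κ_J = limsup (log dim P_l)/(log l) = 0`. -/

theorem stmt_5 {M : Type*} [TopologicalSpace M] [CompactSpace M]
    [ConnectedSpace M]
    {A : Type*} [AddCommGroup A] [Module ℂ A] [Module C(M, ℂ) A]
    [IsScalarTower ℂ C(M, ℂ) A]
    (dbar : C(M, ℂ) →ₗ[ℂ] A)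
    (hleib : ∀ f g : C(M, ℂ), dbar (f * g) = f • dbar g + g • dbar f)
    (hmax : ∀ f : C(M, ℂ), dbar f = 0 → ∃ c : ℂ, f = ContinuousMap.const M c)
    (γ : A) (l₀ : ℕ) (hl₀ : 1 ≤ l₀)
    (F : C(M, ℂ)) (hFnv : ∀ x, F x ≠ 0) (hF : Dop dbar γ l₀ F = 0)
    (hmin : ∀ l : ℕ, 1 ≤ l → l < l₀ →
      ¬ ∃ h : C(M, ℂ), (∀ x, h x ≠ 0) ∧ Dop dbar γ l h = 0) :
    (∀ l : ℕ, 1 ≤ l →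
      Module.finrank ℂ (LinearMap.ker (Dop dbar γ l)) =
        if l₀ ∣ l then 1 else 0) ∧
    Filter.limsup
      (fun l : ℕ =>
        Real.log (Module.finrank ℂ (LinearMap.ker (Dop dbar γ l))) /
          Real.log l) Filter.atTop = 0 := by
  -- Step 1: kernel in divisible degrees is the span of F^q
  have hconst : ∀ (c : ℂ) (f : C(M, ℂ)), ContinuousMap.const M c * f = c • f := by
    intro c f; ext x; simp
  have hspan : ∀ q : ℕ,
      LinearMap.ker (Dop dbar γ (q * l₀)) = Submodule.span ℂ {F ^ q} := by
    intro q
    apply le_antisymm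
    · intro g hg
      rw [LinearMap.mem_ker] at hg
      obtain ⟨h, hgh, hh⟩ := aux_descend dbar hleib γ hFnv hF (l := q * l₀)
        (q := q) (r := 0) (by ring) hg
      have hh' : dbar h = 0 := by
        have : dbar h + ((0 : ℕ) : ℂ) • (h • γ) = 0 := hh
        simpa using this
      obtain ⟨c, hc⟩ := hmax h hh'
      rw [Submodule.mem_span_singleton]
      exact ⟨c, by rw [hgh, hc, hconst]⟩
    · rw [Submodule.span_le, Set.singleton_subset_iff, SetLike.mem_coe,
        LinearMap.mem_ker]
      exact aux_Dop_pow dbar hleib γ hF q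
  -- Step 2: kernel in degrees 1 ≤ r < l₀ is trivial
  have hlow : ∀ r : ℕ, 1 ≤ r → r < l₀ →
      LinearMap.ker (Dop dbar γ r) = ⊥ := by
    intro r hr1 hr2
    rw [eq_bot_iff]
    intro g hg
    rw [LinearMap.mem_ker] at hg
    simp only [Submodule.mem_bot]
    by_contra hgne
    have hx : ∃ x, g x ≠ 0 := by
      by_contra hx
      push_neg at hx
      exact hgne (by ext x; simpa using hx x)
    obtain ⟨x₀, hx₀⟩ := hx
    have hpow : Dop dbar γ (l₀ * r) (g ^ l₀) = 0 :=
      aux_Dop_pow dbar hleib γ hg l₀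
    have hmem : g ^ l₀ ∈ LinearMap.ker (Dop dbar γ (r * l₀)) := by
      rw [LinearMap.mem_ker, mul_comm r l₀]
      exact hpow
    rw [hspan r, Submodule.mem_span_singleton] at hmem
    obtain ⟨c, hc⟩ := hmem
    have hcne : c ≠ 0 := by
      intro h0
      rw [h0, zero_smul] at hc
      have := congrArg (fun f : C(M, ℂ) => f x₀) hc
      simp only [ContinuousMap.pow_apply, ContinuousMap.zero_apply] at this
      exact pow_ne_zero _ hx₀ this.symm
    have hgnv : ∀ x, g x ≠ 0 := by
      intro x
      have := congrArg (fun f : C(M, ℂ) => f x) hc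
      simp only [ContinuousMap.pow_apply, ContinuousMap.smul_apply,
        ContinuousMap.pow_apply, smul_eq_mul] at this
      intro h0
      rw [h0, zero_pow (by omega)] at this
      exact mul_ne_zero hcne (pow_ne_zero _ (hFnv x)) this
    exact hmin r hr1 hr2 ⟨g, hgnv, hg⟩
  -- Step 3: kernel in non-divisible degrees is trivial
  have hnondvd : ∀ l : ℕ, 1 ≤ l → ¬ l₀ ∣ l →
      LinearMap.ker (Dop dbar γ l) = ⊥ := by
    intro l hl1 hld
    have hmod : l % l₀ ≠ 0 := fun h => hld (Nat.dvd_of_mod_eq_zero h)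
    have hmodlt : l % l₀ < l₀ := Nat.mod_lt _ (by omega)
    rw [eq_bot_iff]
    intro g hg
    rw [LinearMap.mem_ker] at hg
    obtain ⟨h, hgh, hh⟩ := aux_descend dbar hleib γ hFnv hF
      (l := l) (q := l / l₀) (r := l % l₀) (by rw [mul_comm]; exact (Nat.div_add_mod l l₀).symm) hg
    have hh0 : h = 0 := by
      have : h ∈ LinearMap.ker (Dop dbar γ (l % l₀)) := hh
      rwa [hlow _ (by omega) hmodlt, Submodule.mem_bot] at this
    simp only [Submodule.mem_bot]
    rw [hgh, hh0, zero_mul]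
  have hM : Nonempty M := inferInstance
  have hFq_ne : ∀ q : ℕ, F ^ q ≠ (0 : C(M, ℂ)) := by
    intro q h0
    have := congrArg (fun f : C(M, ℂ) => f hM.some) h0
    simp only [ContinuousMap.pow_apply, ContinuousMap.zero_apply] at this
    exact pow_ne_zero _ (hFnv hM.some) this
  have main : ∀ l : ℕ, 1 ≤ l →
      Module.finrank ℂ (LinearMap.ker (Dop dbar γ l)) =
        if l₀ ∣ l then 1 else 0 := by
    intro l hl1
    by_cases hd : l₀ ∣ l
    · rw [if_pos hd]
      obtain ⟨q, hq⟩ := hd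
      rw [hq, mul_comm l₀ q, hspan q]
      exact finrank_span_singleton (hFq_ne q)
    · rw [if_neg hd, hnondvd l hl1 hd]
      exact finrank_bot ℂ _
  refine ⟨main, ?_⟩
  have hev : (fun l : ℕ =>
      Real.log (Module.finrank ℂ (LinearMap.ker (Dop dbar γ l))) /
        Real.log l) =ᶠ[atTop] fun _ => (0 : ℝ) := by
    filter_upwards [eventually_ge_atTop 1] with l hl
    rw [main l hl]
    by_cases hd : l₀ ∣ l
    · rw [if_pos hd]; simp
    · rw [if_neg hd]; simp
  rw [limsup_congr hev, limsup_const]
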